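/- Let G=(V,E) be a finite directed graph whose vertices are points of a metric space, and let q be a query point such that all pairwise distances from vertices to q are distinct. Let N_{i,q} denote the i-th nearest vertex to q, and let NG_{S,q} be the subgraph of G induced by {N_{1,q},...,N_{S,q}}. If N_{i,q} can reach N_{j,q} by a directed path in NG_{S,q} (with 1 ≤ i,j ≤ S), then greedy beam search on G with query q, entry point N_{i,q}, and result-list size L ≥ S visits N_{j,q} before terminating. -/

import Mathlib

attribute [local instance] Classical.propDecidable

/-- The state of greedy beam search (Algorithm 1): the set `C` of unexpanded
candidates, the result set `R`, and the set of visited vertices. -/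
structure SState (V : Type*) where
  C : Finset V
  R : Finset V
  visited : Finset V

variable {V : Type*} [Fintype V] [DecidableEq V]

/-- `rank dist x = i` means `x` is the `i`-th nearest vertex to the query
(with respect to the distance-to-query function `dist`), i.e. `F_{x,q} = i`. -/
noncomputable def rank (dist : V → ℝ) (x : V) : ℕ :=
  (Finset.univ.filter fun y => dist y ≤ dist x).card

/-- Keep only the `L` closest (to the query) elements of `R`. -/
noncomputable def truncate (dist : V → ℝ) (L : ℕ) (R : Finset V) : Finset V :=
  R.filter fun x => (R.filter fun y => dist y ≤ dist x).card ≤ L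

/-- An element of `C` closest to the query. -/
noncomputable def argmin (dist : V → ℝ) (C : Finset V) (h : C.Nonempty) : V :=
  (C.exists_min_image dist h).choose

/-- Insertion condition of Algorithm 1: `|R| < L` or `δ(v,q) < d_max`. -/
def insertCond (dist : V → ℝ) (L : ℕ) (R : Finset V) (v : V) : Prop :=
  R.card < L ∨ ∃ x ∈ R, dist v < dist x

/-- Inner loop of Algorithm 1: process the (unvisited) neighbors of the popped
vertex one by one, inserting them into `C` and `R` and truncating `R` to its
`L` closest elements. -/
noncomputable def insertLoop (dist : V → ℝ) (L : ℕ) : List V → SState V → SState V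
  | [], s => s
  | v :: vs, s =>
    insertLoop dist L vs <|
      if v ∈ s.visited then s
      else if insertCond dist L s.R v then
        ⟨insert v s.C, truncate dist L (insert v s.R), insert v s.visited⟩
      else ⟨s.C, s.R, insert v s.visited⟩

/-- Main loop of Algorithm 1 (greedy beam search) with explicit fuel.
At each step the closest unexpanded candidate `u` is popped; the loop breaks if
`δ(u,q) > d_max` (i.e. every element of the nonempty `R` is strictly closer
than `u`), and otherwise expands `u`. -/
noncomputable def gloop (Adj : V → V → Prop) (dist : V → ℝ) (L : ℕ) :
    ℕ → SState V → SState V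
  | 0, s => s
  | n + 1, s =>
    if hC : s.C.Nonempty then
      let u := argmin dist s.C hC
      if s.R.Nonempty ∧ ∀ x ∈ s.R, dist x < dist u then s
      else
        gloop Adj dist L n
          (insertLoop dist L ((Finset.univ.filter fun v => Adj u v).toList)
            ⟨s.C.erase u, s.R, s.visited⟩)
    else s

/-- Greedy beam search on the graph `Adj` with distance-to-query `dist`,
result-list size `L` and entry point `ep`. -/
noncomputable def search (Adj : V → V → Prop) (dist : V → ℝ) (L : ℕ) (ep : V) : SState V :=
  gloop Adj dist L (Fintype.card V + 1) ⟨{ep}, {ep}, {ep}⟩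

/-- Adjacency of `NG_{S,q}`, the subgraph of `Adj` induced by the `S` nearest
vertices to the query. -/
def AdjS (Adj : V → V → Prop) (dist : V → ℝ) (S : ℕ) (a b : V) : Prop :=
  Adj a b ∧ rank dist a ≤ S ∧ rank dist b ≤ S

/-! ### Auxiliary lemmas -/

lemma truncate_subset (dist : V → ℝ) (L : ℕ) (R : Finset V) : truncate dist L R ⊆ R :=
  Finset.filter_subset _ _

lemma mem_truncate {dist : V → ℝ} {L : ℕ} {R : Finset V} {w : V}
    (hw : w ∈ R) (hr : rank dist w ≤ L) : w ∈ truncate dist L R := by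
  rw [truncate, Finset.mem_filter]
  refine ⟨hw, le_trans ?_ hr⟩
  rw [rank]
  exact Finset.card_le_card (fun x hx => by
    rw [Finset.mem_filter] at hx ⊢
    exact ⟨Finset.mem_univ x, hx.2⟩)

lemma rank_gt_of_not_insertCond {dist : V → ℝ} {L : ℕ} {R : Finset V} {v : V}
    (hvR : v ∉ R) (h : ¬ insertCond dist L R v) : L < rank dist v := by
  rw [insertCond] at h
  push_neg at h
  have hsub : insert v R ⊆ Finset.univ.filter fun y => dist y ≤ dist v := by
    intro x hx
    rw [Finset.mem_insert] at hx
    rw [Finset.mem_filter]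
    refine ⟨Finset.mem_univ x, ?_⟩
    rcases hx with rfl | hx
    · exact le_refl _
    · exact h.2 x hx
  have hc := Finset.card_le_card hsub
  rw [Finset.card_insert_of_notMem hvR] at hc
  have h1 := h.1
  rw [rank]
  omega

lemma insertLoop_visited_mono (dist : V → ℝ) (L : ℕ) :
    ∀ (l : List V) (s : SState V), s.visited ⊆ (insertLoop dist L l s).visited
  | [], s => by rw [insertLoop]
  | v :: vs, s => by
    rw [insertLoop]
    split_ifs with h1 h2
    · exact insertLoop_visited_mono dist L vs s
    · exact fun x hx => insertLoop_visited_mono dist L vs _ (Finset.mem_insert_of_mem hx)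
    · exact fun x hx => insertLoop_visited_mono dist L vs _ (Finset.mem_insert_of_mem hx)

lemma insertLoop_C_mono (dist : V → ℝ) (L : ℕ) :
    ∀ (l : List V) (s : SState V), s.C ⊆ (insertLoop dist L l s).C
  | [], s => by rw [insertLoop]
  | v :: vs, s => by
    rw [insertLoop]
    split_ifs with h1 h2
    · exact insertLoop_C_mono dist L vs s
    · exact fun x hx => insertLoop_C_mono dist L vs _ (Finset.mem_insert_of_mem hx)
    · exact fun x hx => insertLoop_C_mono dist L vs _ hx

lemma insertLoop_mem_visited (dist : V → ℝ) (L : ℕ) :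
    ∀ (l : List V) (s : SState V) {x : V}, x ∈ l → x ∈ (insertLoop dist L l s).visited
  | [], _, x, hx => absurd hx List.not_mem_nil
  | v :: vs, s, x, hx => by
    rw [insertLoop]
    rcases List.mem_cons.1 hx with rfl | hx
    · split_ifs with h1 h2
      · exact insertLoop_visited_mono dist L vs s h1
      · exact insertLoop_visited_mono dist L vs _ (Finset.mem_insert_self _ _)
      · exact insertLoop_visited_mono dist L vs _ (Finset.mem_insert_self _ _)
    · split_ifs <;> exact insertLoop_mem_visited dist L vs _ hx

lemma insertLoop_C_subset (dist : V → ℝ) (L : ℕ) :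
    ∀ (l : List V) (s : SState V) {x : V},
      x ∈ (insertLoop dist L l s).C → x ∈ s.C ∨ x ∉ s.visited
  | [], s, x, hx => by rw [insertLoop] at hx; exact Or.inl hx
  | v :: vs, s, x, hx => by
    rw [insertLoop] at hx
    split_ifs at hx with h1 h2
    · exact insertLoop_C_subset dist L vs s hx
    · rcases insertLoop_C_subset dist L vs _ hx with h | h
      · rcases Finset.mem_insert.1 h with rfl | h
        · exact Or.inr h1
        · exact Or.inl h
      · exact Or.inr fun hx' => h (Finset.mem_insert_of_mem hx')
    · rcases insertLoop_C_subset dist L vs _ hx with h | h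
      · exact Or.inl h
      · exact Or.inr fun hx' => h (Finset.mem_insert_of_mem hx')

/-- Bundle of invariants: `C ⊆ visited`, `R ⊆ visited`, and every visited
vertex of rank at most `L` is in `R`. -/
def GInv (dist : V → ℝ) (L : ℕ) (s : SState V) : Prop :=
  s.C ⊆ s.visited ∧ s.R ⊆ s.visited ∧
    ∀ w, rank dist w ≤ L → w ∈ s.visited → w ∈ s.R

lemma GInv_step1 {dist : V → ℝ} {L : ℕ} {s : SState V} (h : GInv dist L s) (v : V) :
    GInv dist L ⟨insert v s.C, truncate dist L (insert v s.R), insert v s.visited⟩ := by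
  refine ⟨Finset.insert_subset_insert v h.1,
    (truncate_subset dist L _).trans (Finset.insert_subset_insert v h.2.1), ?_⟩
  intro w hr hw
  rcases Finset.mem_insert.1 hw with rfl | hw
  · exact mem_truncate (Finset.mem_insert_self _ _) hr
  · exact mem_truncate (Finset.mem_insert_of_mem (h.2.2 w hr hw)) hr

lemma GInv_step2 {dist : V → ℝ} {L : ℕ} {s : SState V} (h : GInv dist L s) {v : V}
    (h1 : v ∉ s.visited) (h2 : ¬ insertCond dist L s.R v) :
    GInv dist L ⟨s.C, s.R, insert v s.visited⟩ := by
  refine ⟨h.1.trans (Finset.subset_insert _ _), h.2.1.trans (Finset.subset_insert _ _), ?_⟩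
  intro w hr hw
  rcases Finset.mem_insert.1 hw with rfl | hw
  · exact absurd hr (not_le.2 (rank_gt_of_not_insertCond (fun hvR => h1 (h.2.1 hvR)) h2))
  · exact h.2.2 w hr hw

lemma insertLoop_GInv (dist : V → ℝ) (L : ℕ) :
    ∀ (l : List V) (s : SState V), GInv dist L s → GInv dist L (insertLoop dist L l s)
  | [], s, h => by rw [insertLoop]; exact h
  | v :: vs, s, h => by
    rw [insertLoop]
    split_ifs with h1 h2
    · exact insertLoop_GInv dist L vs s h
    · exact insertLoop_GInv dist L vs _ (GInv_step1 h v)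
    · exact insertLoop_GInv dist L vs _ (GInv_step2 h h1 h2)

lemma insertLoop_R_keep (dist : V → ℝ) (L : ℕ) :
    ∀ (l : List V) (s : SState V) {w : V}, rank dist w ≤ L → w ∈ s.R →
      w ∈ (insertLoop dist L l s).R
  | [], s, w, _, hw => by rw [insertLoop]; exact hw
  | v :: vs, s, w, hr, hw => by
    rw [insertLoop]
    split_ifs with h1 h2
    · exact insertLoop_R_keep dist L vs s hr hw
    · exact insertLoop_R_keep dist L vs _ hr (mem_truncate (Finset.mem_insert_of_mem hw) hr)
    · exact insertLoop_R_keep dist L vs _ hr hw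

lemma insertLoop_C_of_new (dist : V → ℝ) (L : ℕ) :
    ∀ (l : List V) (s : SState V) {w : V}, GInv dist L s → rank dist w ≤ L →
      w ∈ (insertLoop dist L l s).visited →
      w ∈ s.visited ∨ w ∈ (insertLoop dist L l s).C
  | [], s, w, _, _, hw => by rw [insertLoop] at hw ⊢; exact Or.inl hw
  | v :: vs, s, w, hInv, hr, hw => by
    rw [insertLoop] at hw ⊢
    split_ifs at hw ⊢ with h1 h2
    · exact insertLoop_C_of_new dist L vs s hInv hr hw
    · rcases insertLoop_C_of_new dist L vs _ (GInv_step1 hInv v) hr hw with h | h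
      · rcases Finset.mem_insert.1 h with rfl | h
        · exact Or.inr (insertLoop_C_mono dist L vs _ (Finset.mem_insert_self _ _))
        · exact Or.inl h
      · exact Or.inr h
    · rcases insertLoop_C_of_new dist L vs _ (GInv_step2 hInv h1 h2) hr hw with h | h
      · rcases Finset.mem_insert.1 h with rfl | h
        · exact absurd hr (not_le.2
            (rank_gt_of_not_insertCond (fun hvR => h1 (hInv.2.1 hvR)) h2))
        · exact Or.inl h
      · exact Or.inr h

lemma gloop_visited_mono (Adj : V → V → Prop) (dist : V → ℝ) (L : ℕ) :
    ∀ (n : ℕ) (s : SState V), s.visited ⊆ (gloop Adj dist L n s).visited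
  | 0, s => by rw [gloop]
  | n + 1, s => by
    simp only [gloop]
    split_ifs with hC hstop
    · exact subset_rfl
    · exact fun x hx => gloop_visited_mono Adj dist L n _ (insertLoop_visited_mono dist L _ _ hx)
    · exact subset_rfl

lemma gloop_main (Adj : V → V → Prop) (dist : V → ℝ) (L : ℕ) :
    ∀ (n : ℕ) (s : SState V), GInv dist L s →
      (∀ w, rank dist w ≤ L → w ∈ s.visited →
        w ∈ s.C ∨ ∀ z, Adj w z → z ∈ s.visited) →
      Fintype.card V < n + (s.visited \ s.C).card →
      ∀ w, rank dist w ≤ L → w ∈ (gloop Adj dist L n s).visited →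
        ∀ z, Adj w z → z ∈ (gloop Adj dist L n s).visited
  | 0, s, _, _, hcard, w, _, _, z, _ => by
    have := (Finset.card_le_univ (s.visited \ s.C)).trans_eq Finset.card_univ
    omega
  | n + 1, s, hInv, hQ, hcard, w, hr, hw, z, hz => by
    simp only [gloop] at hw ⊢
    split_ifs at hw ⊢ with hC hstop
    · -- stop condition triggered
      rcases hQ w hr hw with hwC | hnb
      · have hu : argmin dist s.C hC ∈ s.C ∧
            ∀ x ∈ s.C, dist (argmin dist s.C hC) ≤ dist x :=
          (s.C.exists_min_image dist hC).choose_spec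
        have hwR := hInv.2.2 w hr (hInv.1 hwC)
        exact absurd (hstop.2 w hwR) (not_lt.2 (hu.2 w hwC))
      · exact hnb z hz
    · -- recursive case
      have hu : argmin dist s.C hC ∈ s.C ∧
          ∀ x ∈ s.C, dist (argmin dist s.C hC) ≤ dist x :=
        (s.C.exists_min_image dist hC).choose_spec
      set u : V := argmin dist s.C hC with hudef
      set nl : List V := (Finset.univ.filter fun v' => Adj u v').toList with hnldef
      set t0 : SState V := ⟨s.C.erase u, s.R, s.visited⟩ with ht0def
      have hGt0 : GInv dist L t0 :=
        ⟨(Finset.erase_subset _ _).trans hInv.1, hInv.2.1, hInv.2.2⟩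
      have hInv' : GInv dist L (insertLoop dist L nl t0) := insertLoop_GInv dist L nl t0 hGt0
      have hQ' : ∀ w', rank dist w' ≤ L → w' ∈ (insertLoop dist L nl t0).visited →
          w' ∈ (insertLoop dist L nl t0).C ∨
            ∀ z', Adj w' z' → z' ∈ (insertLoop dist L nl t0).visited := by
        intro w' hr' hw'
        rcases insertLoop_C_of_new dist L nl t0 hGt0 hr' hw' with hvis | hc
        · rcases hQ w' hr' hvis with hwC | hnb
          · by_cases hwu : w' = u
            · subst hwu
              refine Or.inr fun z' hz' => insertLoop_mem_visited dist L nl t0 ?_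
              rw [hnldef, Finset.mem_toList, Finset.mem_filter]
              exact ⟨Finset.mem_univ z', hz'⟩
            · exact Or.inl (insertLoop_C_mono dist L nl t0 (Finset.mem_erase.2 ⟨hwu, hwC⟩))
          · exact Or.inr fun z' hz' =>
              insertLoop_visited_mono dist L nl t0 (hnb z' hz')
        · exact Or.inl hc
      have hcard' : Fintype.card V < n + ((insertLoop dist L nl t0).visited \
          (insertLoop dist L nl t0).C).card := by
        have hsub : insert u (s.visited \ s.C) ⊆
            (insertLoop dist L nl t0).visited \ (insertLoop dist L nl t0).C := by
          intro x hx
          rcases Finset.mem_insert.1 hx with rfl | hx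
          · refine Finset.mem_sdiff.2
              ⟨insertLoop_visited_mono dist L nl t0 (hInv.1 hu.1), fun hxc => ?_⟩
            rcases insertLoop_C_subset dist L nl t0 hxc with h | h
            · exact (Finset.mem_erase.1 h).1 rfl
            · exact h (hInv.1 hu.1)
          · have hx' := Finset.mem_sdiff.1 hx
            refine Finset.mem_sdiff.2
              ⟨insertLoop_visited_mono dist L nl t0 hx'.1, fun hxc => ?_⟩
            rcases insertLoop_C_subset dist L nl t0 hxc with h | h
            · exact hx'.2 (Finset.mem_of_mem_erase h)
            · exact h hx'.1
        have hcard2 := Finset.card_le_card hsub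
        rw [Finset.card_insert_of_notMem (fun hx => (Finset.mem_sdiff.1 hx).2 hu.1)] at hcard2
        omega
      exact gloop_main Adj dist L n (insertLoop dist L nl t0) hInv' hQ' hcard' w hr hw z hz
    · rcases hQ w hr hw with hwC | hnb
      · exact absurd hwC fun h => hC ⟨w, h⟩
      · exact hnb z hz

/-- If `N_{i,q}` can reach `N_{j,q}` by a directed path inside
`NG_{S,q}` (`1 ≤ i, j ≤ S`), then greedy beam search with query `q`, entry point
`N_{i,q}` and result-list size `L ≥ S` visits `N_{j,q}` before terminating. -/
theorem greedy_search_visits_of_reachable_in_NG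
    (Adj : V → V → Prop) (dist : V → ℝ) (hinj : Function.Injective dist)
    (S L : ℕ) (hL : S ≤ L) (u v : V)
    (hu : rank dist u ≤ S) (hv : rank dist v ≤ S)
    (hreach : Relation.ReflTransGen (AdjS Adj dist S) u v) :
    v ∈ (search Adj dist L u).visited := by
  have hInv0 : GInv dist L ⟨{u}, {u}, {u}⟩ :=
    ⟨subset_rfl, subset_rfl, fun w _ hw => hw⟩
  have hQ0 : ∀ w, rank dist w ≤ L → w ∈ (SState.mk {u} {u} {u} : SState V).visited →
      w ∈ (SState.mk {u} {u} {u} : SState V).C ∨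
        ∀ z, Adj w z → z ∈ (SState.mk {u} {u} {u} : SState V).visited :=
    fun w _ hw => Or.inl hw
  have hcard0 : Fintype.card V < (Fintype.card V + 1) +
      ((SState.mk {u} {u} {u} : SState V).visited \ (SState.mk {u} {u} {u} : SState V).C).card := by
    simp
  have hmain := gloop_main Adj dist L (Fintype.card V + 1) ⟨{u}, {u}, {u}⟩ hInv0 hQ0 hcard0
  rw [search]
  clear hv
  induction hreach with
  | refl =>
    exact gloop_visited_mono Adj dist L _ _ (Finset.mem_singleton_self u)
  | tail hab hbc ih =>
    exact hmain _ (le_trans hbc.2.1 hL) ih _ hbc.1
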